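/- arXiv:math/0107110 — 2 statements merged into one kernel-verified Lean document; each statement's English description precedes it below -/
import Mathlib

section
/- Let k be a field of characteristic different from 2, let n ≥ 2, and let a₁, …, aₙ be units of k. Suppose there exists a nonzero vector (x, t) ∈ k^{2^{n−1}} × k with ⟨⟨a₁,…,a_{n−1}⟩⟩(x) = aₙ·t², i.e. the quadratic form ⟨⟨a₁,…,a_{n−1}⟩⟩ ⊥ ⟨−aₙ⟩ is isotropic over k (equivalently, the norm quadric Q_{a₁,…,aₙ} has a k-rational point). Then the symbol {a₁,…,aₙ} is divisible by 2 in the Milnor K-group K_n^M(k). -/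
open scoped TensorProduct

/-- The Steinberg submodule of the `n`-fold tensor power (over `ℤ`) of `kˣ`: the
subgroup generated by the elementary tensors `a₁ ⊗ ⋯ ⊗ aₙ` with `aᵢ + aᵢ₊₁ = 1` in `k`
for some `i`. -/
def steinbergSubmodule (k : Type*) [Field k] (n : ℕ) :
    Submodule ℤ (⨂[ℤ]^n (Additive kˣ)) :=
  Submodule.span ℤ
    { x | ∃ (u : Fin n → kˣ) (i j : Fin n), (i : ℕ) + 1 = (j : ℕ) ∧
        ((u i : k) + (u j : k) = 1) ∧
        x = PiTensorProduct.tprod ℤ (fun t => Additive.ofMul (u t)) }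

/-- The `n`-th Milnor K-group `K_n^M(k)`: the quotient of the `n`-fold tensor power over `ℤ`
of the multiplicative group `kˣ` by the Steinberg relations. -/
def MilnorKGroup (k : Type*) [Field k] (n : ℕ) :=
  (⨂[ℤ]^n (Additive kˣ)) ⧸ steinbergSubmodule k n

noncomputable instance (k : Type*) [Field k] (n : ℕ) : AddCommGroup (MilnorKGroup k n) :=
  Submodule.Quotient.addCommGroup _

/-- The Milnor symbol `{a₁,…,aₙ} ∈ K_n^M(k)`. -/
noncomputable def milnorSymbol {k : Type*} [Field k] {n : ℕ} (u : Fin n → kˣ) : MilnorKGroup k n :=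
  Submodule.Quotient.mk (PiTensorProduct.tprod ℤ (fun t => Additive.ofMul (u t)))

/-- The coefficient of the Pfister form `⟨⟨a₁,…,aₙ⟩⟩` at the variable indexed by
`S : Fin n → Bool`. -/
def pfisterCoeff {k : Type*} [Field k] (n : ℕ) (a : Fin n → k) (S : Fin n → Bool) : k :=
  ∏ i ∈ Finset.univ.filter (fun i => S i = true), (-(a i))

/-- The `n`-fold Pfister form `⟨⟨a₁,…,aₙ⟩⟩`, a diagonal quadratic form in `2ⁿ` variables
indexed by `Fin n → Bool`. -/
def pfisterForm {k : Type*} [Field k] (n : ℕ) (a : Fin n → k)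
    (x : (Fin n → Bool) → k) : k :=
  ∑ S : Fin n → Bool, pfisterCoeff n a S * x S ^ 2

section Aux


variable {k : Type*} [Field k]

noncomputable def symT {k : Type*} [Field k] {n : ℕ} (u : Fin n → kˣ) :
    ⨂[ℤ]^n (Additive kˣ) :=
  PiTensorProduct.tprod ℤ (fun t => Additive.ofMul (u t))

lemma ofMul_comp_snoc {n : ℕ} (u : Fin n → kˣ) (w : kˣ) :
    (fun t => Additive.ofMul ((Fin.snoc u w : Fin (n+1) → kˣ) t)) =
      (Fin.snoc (fun t => Additive.ofMul (u t)) (Additive.ofMul w) : Fin (n+1) → Additive kˣ) := by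
  funext t
  refine Fin.lastCases ?_ (fun i => ?_) t <;> simp

lemma symT_snoc {n : ℕ} (u : Fin n → kˣ) (w : kˣ) :
    symT (Fin.snoc u w) =
      PiTensorProduct.tprod ℤ
        (Fin.snoc (fun t => Additive.ofMul (u t)) (Additive.ofMul w) : Fin (n+1) → Additive kˣ) := by
  rw [symT, ofMul_comp_snoc]

lemma symT_last_mul {n : ℕ} (u : Fin n → kˣ) (x y : kˣ) :
    symT (Fin.snoc u (x * y)) = symT (Fin.snoc u x) + symT (Fin.snoc u y) := by
  rw [symT_snoc, symT_snoc, symT_snoc, ofMul_mul]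
  exact MultilinearMap.snoc_add _ _ _ _

lemma symT_last_one {n : ℕ} (u : Fin n → kˣ) :
    symT (Fin.snoc u (1 : kˣ)) = 0 := by
  rw [symT_snoc]
  exact MultilinearMap.map_coord_zero _ (Fin.last n) (by simp)

lemma symT_last_inv {n : ℕ} (u : Fin n → kˣ) (x : kˣ) :
    symT (Fin.snoc u x⁻¹) = - symT (Fin.snoc u x) := by
  have h := symT_last_mul u x x⁻¹
  rw [mul_inv_cancel, symT_last_one] at h
  exact eq_neg_of_add_eq_zero_right h.symm

lemma snoc_snoc_update {n : ℕ} (m : Fin n → Additive kˣ) (X W : Additive kˣ) (z : Additive kˣ) :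
    (Fin.snoc (Fin.snoc m z) W : Fin (n+2) → Additive kˣ) =
      Function.update (Fin.snoc (Fin.snoc m X) W : Fin (n+2) → Additive kˣ)
        ((Fin.last n).castSucc) z := by
  rw [← Fin.snoc_update, Fin.update_snoc_last]

lemma symT_snd_mul {n : ℕ} (u : Fin n → kˣ) (x y w : kˣ) :
    symT (Fin.snoc (Fin.snoc u (x * y)) w) =
      symT (Fin.snoc (Fin.snoc u x) w) + symT (Fin.snoc (Fin.snoc u y) w) := by
  rw [symT_snoc, symT_snoc, symT_snoc, ofMul_comp_snoc, ofMul_comp_snoc, ofMul_comp_snoc,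
    ofMul_mul]
  rw [snoc_snoc_update _ (Additive.ofMul x) _ (Additive.ofMul x + Additive.ofMul y),
    snoc_snoc_update _ (Additive.ofMul x) _ (Additive.ofMul x),
    snoc_snoc_update _ (Additive.ofMul x) _ (Additive.ofMul y), Function.update_idem]
  exact MultilinearMap.map_update_add (M₁ := fun _ : Fin (n+2) => Additive kˣ) (PiTensorProduct.tprod ℤ) _ ((Fin.last n).castSucc) (Additive.ofMul x) (Additive.ofMul y)

lemma symT_snd_one {n : ℕ} (u : Fin n → kˣ) (w : kˣ) :
    symT (Fin.snoc (Fin.snoc u (1 : kˣ)) w) = 0 := by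
  rw [symT_snoc, ofMul_comp_snoc]
  exact MultilinearMap.map_coord_zero _ ((Fin.last n).castSucc) (by simp)

lemma symT_snd_inv {n : ℕ} (u : Fin n → kˣ) (x w : kˣ) :
    symT (Fin.snoc (Fin.snoc u x⁻¹) w) = - symT (Fin.snoc (Fin.snoc u x) w) := by
  have h := symT_snd_mul u x x⁻¹ w
  rw [mul_inv_cancel, symT_snd_one] at h
  exact eq_neg_of_add_eq_zero_right h.symm

end Aux

section Steinberg

variable {k : Type*} [Field k]

lemma steinberg_mem {n : ℕ} (u : Fin n → kˣ) (x y : kˣ) (h : (x : k) + (y : k) = 1) :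
    symT (Fin.snoc (Fin.snoc u x) y) ∈ steinbergSubmodule k (n + 2) := by
  apply Submodule.subset_span
  refine ⟨Fin.snoc (Fin.snoc u x) y, (Fin.last n).castSucc, Fin.last (n + 1), by simp, ?_, rfl⟩
  simpa using h

lemma symT_neg_self_mem {n : ℕ} (u : Fin n → kˣ) (x : kˣ) :
    symT (Fin.snoc (Fin.snoc u x) (-x)) ∈ steinbergSubmodule k (n + 2) := by
  by_cases hx : x = 1
  · subst hx
    rw [symT_snd_one]
    exact zero_mem _
  · have hxk : (x : k) ≠ 1 := fun hc => hx (Units.ext (by simpa using hc))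
    have h1 : (1 : k) - (x : k) ≠ 0 := sub_ne_zero.mpr (Ne.symm hxk)
    have hxinv : ((x : k))⁻¹ ≠ 1 := by
      exact fun hc => hxk (by rwa [inv_eq_one] at hc)
    have h2 : (1 : k) - ((x : k))⁻¹ ≠ 0 := sub_ne_zero.mpr (Ne.symm hxinv)
    set u₁ : kˣ := Units.mk0 _ h1 with hu₁
    set u₂ : kˣ := Units.mk0 _ h2 with hu₂
    have mem1 : symT (Fin.snoc (Fin.snoc u x) u₁) ∈ steinbergSubmodule k (n + 2) :=
      steinberg_mem u x u₁ (by simp [hu₁])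
    have mem2 : symT (Fin.snoc (Fin.snoc u x⁻¹) u₂) ∈ steinbergSubmodule k (n + 2) :=
      steinberg_mem u x⁻¹ u₂ (by simp [hu₂, Units.val_inv_eq_inv_val])
    have hneg : (-x : kˣ) = u₁ * u₂⁻¹ := by
      apply Units.ext
      have hx0 : (x : k) ≠ 0 := x.ne_zero
      rw [Units.val_mul, Units.val_neg]
      rw [show ((u₂⁻¹ : kˣ) : k) = ((u₂ : k))⁻¹ from Units.val_inv_eq_inv_val u₂]
      simp only [hu₁, hu₂, Units.val_mk0]
      have h1' : (-1 : k) + (x : k) ≠ 0 := by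
        intro hc; exact h1 (by linear_combination -hc)
      field_simp
      linear_combination
    have key : symT (Fin.snoc (Fin.snoc u x) (-x)) =
        symT (Fin.snoc (Fin.snoc u x) u₁) + symT (Fin.snoc (Fin.snoc u x⁻¹) u₂) := by
      rw [hneg, symT_last_mul, symT_last_inv, symT_snd_inv]
    rw [key]
    exact add_mem mem1 mem2

lemma symT_swap_mem {n : ℕ} (u : Fin n → kˣ) (x y : kˣ) :
    symT (Fin.snoc (Fin.snoc u x) y) + symT (Fin.snoc (Fin.snoc u y) x) ∈
      steinbergSubmodule k (n + 2) := by
  have e : symT (Fin.snoc (Fin.snoc u (x * y)) (-(x * y))) =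
      symT (Fin.snoc (Fin.snoc u x) (-x)) + symT (Fin.snoc (Fin.snoc u x) y) +
      (symT (Fin.snoc (Fin.snoc u y) (-y)) + symT (Fin.snoc (Fin.snoc u y) x)) := by
    rw [symT_snd_mul]
    congr 1
    · rw [show (-(x * y)) = (-x) * y from by rw [neg_mul], symT_last_mul]
    · rw [show (-(x * y)) = (-y) * x from by rw [neg_mul, mul_comm], symT_last_mul]
  have : symT (Fin.snoc (Fin.snoc u x) y) + symT (Fin.snoc (Fin.snoc u y) x) =
      symT (Fin.snoc (Fin.snoc u (x * y)) (-(x * y))) -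
        symT (Fin.snoc (Fin.snoc u x) (-x)) - symT (Fin.snoc (Fin.snoc u y) (-y)) := by
    rw [e]; abel
  rw [this]
  exact sub_mem (sub_mem (symT_neg_self_mem u (x * y)) (symT_neg_self_mem u x))
    (symT_neg_self_mem u y)

end Steinberg

section Append

variable {k : Type*} [Field k]

/-- Auxiliary: currying the last tensor factor. -/
noncomputable def appendAux (k : Type*) [Field k] (n : ℕ) :
    (⨂[ℤ]^n (Additive kˣ)) →ₗ[ℤ] (Additive kˣ) →ₗ[ℤ] (⨂[ℤ]^(n + 1) (Additive kˣ)) :=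
  PiTensorProduct.lift
    ((PiTensorProduct.tprod ℤ (s := fun _ : Fin (n + 1) => Additive kˣ)).curryRight)

/-- Appending a fixed unit as the last entry, as a linear map on tensor powers. -/
noncomputable def appendT (k : Type*) [Field k] (n : ℕ) (w : kˣ) :
    (⨂[ℤ]^n (Additive kˣ)) →ₗ[ℤ] (⨂[ℤ]^(n + 1) (Additive kˣ)) :=
  (appendAux k n).flip (Additive.ofMul w)

lemma appendT_symT {n : ℕ} (w : kˣ) (u : Fin n → kˣ) :
    appendT k n w (symT u) = symT (Fin.snoc u w) := by
  rw [symT, symT_snoc, appendT, LinearMap.flip_apply, appendAux, PiTensorProduct.lift.tprod,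
    MultilinearMap.curryRight_apply]

lemma appendT_mem {n : ℕ} (w : kˣ) {z : ⨂[ℤ]^n (Additive kˣ)}
    (hz : z ∈ steinbergSubmodule k n) :
    appendT k n w z ∈ steinbergSubmodule k (n + 1) := by
  have hle : steinbergSubmodule k n ≤
      (steinbergSubmodule k (n + 1)).comap (appendT k n w) := by
    rw [steinbergSubmodule, Submodule.span_le]
    rintro _ ⟨u, i, j, hij, huv, rfl⟩
    simp only [SetLike.mem_coe, Submodule.mem_comap]
    rw [show (PiTensorProduct.tprod ℤ fun t => Additive.ofMul (u t)) = symT u from rfl,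
      appendT_symT]
    apply Submodule.subset_span
    refine ⟨Fin.snoc u w, i.castSucc, j.castSucc, by exact hij, by first | simpa using huv | exact huv, rfl⟩
  exact hle hz

end Append

section D2

variable {k : Type*} [Field k]

/-- Divisibility by 2 modulo the Steinberg submodule. -/
def D2 (k : Type*) [Field k] {n : ℕ} (x : ⨂[ℤ]^n (Additive kˣ)) : Prop :=
  ∃ z, x - (z + z) ∈ steinbergSubmodule k n

lemma D2_add {n : ℕ} {x y : ⨂[ℤ]^n (Additive kˣ)} (hx : D2 k x) (hy : D2 k y) :
    D2 k (x + y) := by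
  obtain ⟨z₁, h₁⟩ := hx
  obtain ⟨z₂, h₂⟩ := hy
  refine ⟨z₁ + z₂, ?_⟩
  have : x + y - (z₁ + z₂ + (z₁ + z₂)) = (x - (z₁ + z₁)) + (y - (z₂ + z₂)) := by abel
  rw [this]
  exact add_mem h₁ h₂

lemma D2_neg {n : ℕ} {x : ⨂[ℤ]^n (Additive kˣ)} (hx : D2 k x) : D2 k (-x) := by
  obtain ⟨z, h⟩ := hx
  refine ⟨-z, ?_⟩
  have : -x - (-z + -z) = -(x - (z + z)) := by abel
  rw [this]
  exact neg_mem h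

lemma D2_sub {n : ℕ} {x y : ⨂[ℤ]^n (Additive kˣ)} (hx : D2 k x) (hy : D2 k y) :
    D2 k (x - y) := by
  rw [sub_eq_add_neg]
  exact D2_add hx (D2_neg hy)

lemma D2_of_sub_mem {n : ℕ} {x y : ⨂[ℤ]^n (Additive kˣ)}
    (h : x - y ∈ steinbergSubmodule k n) (hy : D2 k y) : D2 k x := by
  obtain ⟨z, hz⟩ := hy
  refine ⟨z, ?_⟩
  have : x - (z + z) = (x - y) + (y - (z + z)) := by abel
  rw [this]
  exact add_mem h hz

lemma D2_appendT {n : ℕ} (w : kˣ) {x : ⨂[ℤ]^n (Additive kˣ)} (hx : D2 k x) :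
    D2 k (appendT k n w x) := by
  obtain ⟨z, hz⟩ := hx
  refine ⟨appendT k n w z, ?_⟩
  have : appendT k n w x - (appendT k n w z + appendT k n w z) =
      appendT k n w (x - (z + z)) := by rw [map_sub, map_add]
  rw [this]
  exact appendT_mem w hz

lemma D2_symT_append {n : ℕ} {v : Fin n → kˣ} (w : kˣ) (h : D2 k (symT v)) :
    D2 k (symT (Fin.snoc v w)) := by
  rw [← appendT_symT]
  exact D2_appendT w h

lemma D2_symT_swap {n : ℕ} {u : Fin n → kˣ} {x y : kˣ}
    (h : D2 k (symT (Fin.snoc (Fin.snoc u y) x))) :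
    D2 k (symT (Fin.snoc (Fin.snoc u x) y)) := by
  apply D2_of_sub_mem (y := -symT (Fin.snoc (Fin.snoc u y) x)) _ (D2_neg h)
  have : symT (Fin.snoc (Fin.snoc u x) y) - -symT (Fin.snoc (Fin.snoc u y) x) =
      symT (Fin.snoc (Fin.snoc u x) y) + symT (Fin.snoc (Fin.snoc u y) x) := by abel
  rw [this]
  exact symT_swap_mem u x y

end D2


section Pfister

variable {k : Type*} [Field k]

lemma pfisterCoeff_eq_prod_ite (n : ℕ) (a : Fin n → k) (S : Fin n → Bool) :
    pfisterCoeff n a S = ∏ i : Fin n, (if S i = true then -(a i) else 1) := by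
  rw [pfisterCoeff, Finset.prod_filter]

lemma pfisterCoeff_snoc (n : ℕ) (a : Fin (n + 1) → k) (S : Fin n → Bool) (b : Bool) :
    pfisterCoeff (n + 1) a (Fin.snoc S b) =
      (if b = true then -(a (Fin.last n)) else 1) *
        pfisterCoeff n (fun i => a i.castSucc) S := by
  rw [pfisterCoeff_eq_prod_ite, pfisterCoeff_eq_prod_ite, Fin.prod_univ_castSucc]
  simp only [Fin.snoc_castSucc, Fin.snoc_last]
  ring

lemma pfisterForm_succ (n : ℕ) (a : Fin (n + 1) → k) (x : (Fin (n + 1) → Bool) → k) :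
    pfisterForm (n + 1) a x =
      pfisterForm n (fun i => a i.castSucc) (fun S => x (Fin.snoc S false)) -
        a (Fin.last n) *
          pfisterForm n (fun i => a i.castSucc) (fun S => x (Fin.snoc S true)) := by
  rw [pfisterForm,
    ← Equiv.sum_comp (Fin.snocEquiv (fun _ => Bool))
      (fun S => pfisterCoeff (n + 1) a S * x S ^ 2),
    Fintype.sum_prod_type, Fintype.sum_bool]
  have hse : ∀ (bb : Bool) (S : Fin n → Bool),
      (Fin.snocEquiv (fun _ => Bool)) (bb, S) = Fin.snoc S bb := fun _ _ => rfl
  simp only [hse]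
  have ht : ∀ S : Fin n → Bool,
      pfisterCoeff (n + 1) a (Fin.snoc S true) * x (Fin.snoc S true) ^ 2 =
        -(a (Fin.last n) *
          (pfisterCoeff n (fun i => a i.castSucc) S * x (Fin.snoc S true) ^ 2)) := by
    intro S; rw [pfisterCoeff_snoc, if_pos rfl]; ring
  have hf : ∀ S : Fin n → Bool,
      pfisterCoeff (n + 1) a (Fin.snoc S false) * x (Fin.snoc S false) ^ 2 =
        pfisterCoeff n (fun i => a i.castSucc) S * x (Fin.snoc S false) ^ 2 := by
    intro S; rw [pfisterCoeff_snoc, if_neg (by simp), one_mul]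
  rw [Finset.sum_congr rfl fun S _ => ht S, Finset.sum_congr rfl fun S _ => hf S]
  rw [pfisterForm, pfisterForm, Finset.sum_neg_distrib, ← Finset.mul_sum]
  abel

lemma pfisterForm_smul (n : ℕ) (a : Fin n → k) (t : k) (x : (Fin n → Bool) → k) :
    pfisterForm n a (fun S => t * x S) = t ^ 2 * pfisterForm n a x := by
  rw [pfisterForm, pfisterForm, Finset.mul_sum]
  exact Finset.sum_congr rfl fun S _ => by ring

lemma pfisterForm_universal (h2 : (2 : k) ≠ 0) {n : ℕ} {a : Fin n → k}
    (ha : ∀ i, a i ≠ 0) {x : (Fin n → Bool) → k} (hx0 : x ≠ 0)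
    (hx : pfisterForm n a x = 0) (w : k) :
    ∃ y, pfisterForm n a y = w := by
  obtain ⟨S₀, hS₀⟩ := Function.ne_iff.mp hx0
  have hS₀' : x S₀ ≠ 0 := by simpa using hS₀
  have hc0 : pfisterCoeff n a S₀ ≠ 0 := by
    rw [pfisterCoeff]
    exact Finset.prod_ne_zero_iff.mpr fun i _ => neg_ne_zero.mpr (ha i)
  set t : k := (w * (pfisterCoeff n a S₀)⁻¹ - 1) * (2 * x S₀)⁻¹ with htdef
  refine ⟨fun S => if S = S₀ then t * x S + 1 else t * x S, ?_⟩
  have key : ∀ S : Fin n → Bool,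
      pfisterCoeff n a S * (if S = S₀ then t * x S + 1 else t * x S) ^ 2 =
        pfisterCoeff n a S * (t * x S) ^ 2 +
          (if S = S₀ then pfisterCoeff n a S₀ * (2 * t * x S₀ + 1) else 0) := by
    intro S
    by_cases hS : S = S₀
    · subst hS; rw [if_pos rfl, if_pos rfl]; ring
    · simp only [if_neg hS, add_zero]
  rw [pfisterForm, Finset.sum_congr rfl fun S _ => key S, Finset.sum_add_distrib,
    Finset.sum_ite_eq' Finset.univ S₀]
  have e1 : (∑ S : Fin n → Bool, pfisterCoeff n a S * (t * x S) ^ 2) = 0 := by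
    have := pfisterForm_smul n a t x
    rw [pfisterForm] at this
    rw [this, hx, mul_zero]
  rw [e1, zero_add, if_pos (Finset.mem_univ S₀)]
  have h2x : 2 * x S₀ ≠ 0 := mul_ne_zero h2 hS₀'
  rw [htdef]
  field_simp
  ring

end Pfister

section MainLemma

variable {k : Type*} [Field k]

lemma mainT : ∀ (r : ℕ) (b : Fin r → kˣ) (c : kˣ) (x : (Fin r → Bool) → k),
    pfisterForm r (fun i => (b i : k)) x = (c : k) → D2 k (symT (Fin.snoc b c)) := by
  intro r
  induction r with
  | zero =>
    intro b c x hx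
    have hsum : pfisterForm 0 (fun i => ((b i : kˣ) : k)) x =
        pfisterCoeff 0 (fun i => ((b i : kˣ) : k)) (fun _ => false) * x (fun _ => false) ^ 2 := by
      rw [pfisterForm]
      exact Fintype.sum_subsingleton _ _
    have hcoeff : pfisterCoeff 0 (fun i => ((b i : kˣ) : k)) (fun _ => false) = 1 := by
      rw [pfisterCoeff]
      simp
    rw [hsum, hcoeff, one_mul] at hx
    have hx0 : x (fun _ => false) ≠ 0 := by
      intro h0
      rw [h0] at hx
      exact c.ne_zero (by rw [← hx]; ring)
    have hc : c = Units.mk0 _ hx0 * Units.mk0 _ hx0 := by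
      apply Units.ext
      rw [Units.val_mul, Units.val_mk0]
      rw [← hx]; ring
    rw [hc, symT_last_mul]
    exact ⟨symT (Fin.snoc b (Units.mk0 _ hx0)), by rw [sub_self]; exact zero_mem _⟩
  | succ r ih =>
    intro b c x hx
    have hb : (Fin.snoc (fun i => b i.castSucc) (b (Fin.last r)) : Fin (r + 1) → kˣ) = b :=
      funext fun i => Fin.lastCases (Fin.snoc_last _ _) (fun j => Fin.snoc_castSucc _ _ _) i
    have hsplit : (c : k) =
        pfisterForm r (fun i => ((b i.castSucc : kˣ) : k)) (fun S => x (Fin.snoc S false)) -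
          (b (Fin.last r) : k) *
            pfisterForm r (fun i => ((b i.castSucc : kˣ) : k)) (fun S => x (Fin.snoc S true)) := by
      rw [← hx, pfisterForm_succ]
    suffices h : D2 k (symT (Fin.snoc (Fin.snoc (fun i => b i.castSucc) (b (Fin.last r))) c)) by
      rwa [hb] at h
    by_cases hq : pfisterForm r (fun i => ((b i.castSucc : kˣ) : k))
        (fun S => x (Fin.snoc S true)) = 0
    · have hxp : pfisterForm r (fun i => ((b i.castSucc : kˣ) : k))
          (fun S => x (Fin.snoc S false)) = (c : k) := by
        rw [hsplit, hq]; ring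
      exact D2_symT_swap (D2_symT_append _ (ih (fun i => b i.castSucc) c _ hxp))
    · by_cases hp : pfisterForm r (fun i => ((b i.castSucc : kˣ) : k))
          (fun S => x (Fin.snoc S false)) = 0
      · -- c = -aL * qu
        have hxt : pfisterForm r (fun i => ((b i.castSucc : kˣ) : k))
            (fun S => x (Fin.snoc S true)) = ((Units.mk0 _ hq : kˣ) : k) :=
          (Units.val_mk0 _).symm
        have hDq : D2 k (symT (Fin.snoc (Fin.snoc (fun i => b i.castSucc) (b (Fin.last r)))
            (Units.mk0 _ hq))) :=
          D2_symT_swap (D2_symT_append _ (ih (fun i => b i.castSucc) (Units.mk0 _ hq) _ hxt))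
        have hcu : c = -(b (Fin.last r) * Units.mk0 _ hq) := by
          apply Units.ext
          rw [Units.val_neg, Units.val_mul, Units.val_mk0, hsplit, hp]
          ring
        rw [hcu, show -(b (Fin.last r) * Units.mk0 _ hq) =
          (-(b (Fin.last r))) * Units.mk0 _ hq from (neg_mul _ _).symm, symT_last_mul]
        exact D2_add ⟨0, by simpa using symT_neg_self_mem (fun i => b i.castSucc) (b (Fin.last r))⟩ hDq
      · -- general case
        have hxf : pfisterForm r (fun i => ((b i.castSucc : kˣ) : k))
            (fun S => x (Fin.snoc S false)) = ((Units.mk0 _ hp : kˣ) : k) :=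
          (Units.val_mk0 _).symm
        have hxt : pfisterForm r (fun i => ((b i.castSucc : kˣ) : k))
            (fun S => x (Fin.snoc S true)) = ((Units.mk0 _ hq : kˣ) : k) :=
          (Units.val_mk0 _).symm
        set b' : Fin r → kˣ := fun i => b i.castSucc with hb'
        set aL : kˣ := b (Fin.last r) with haL
        set pu : kˣ := Units.mk0 _ hp with hpu
        set qu : kˣ := Units.mk0 _ hq with hqu
        have hDp : D2 k (symT (Fin.snoc b' pu)) := ih b' pu _ hxf
        have hDq : D2 k (symT (Fin.snoc b' qu)) := ih b' qu _ hxt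
        have hst : ((aL * qu * pu⁻¹ : kˣ) : k) + ((c * pu⁻¹ : kˣ) : k) = 1 := by
          rw [Units.val_mul, Units.val_mul, Units.val_inv_eq_inv_val, Units.val_mul, hpu, hqu,
            Units.val_mk0, Units.val_mk0]
          simp only [Units.val_inv_eq_inv_val, Units.val_mk0]
          field_simp
          linear_combination hsplit
        have gen := steinberg_mem b' (aL * qu * pu⁻¹) (c * pu⁻¹) hst
        have expand : symT (Fin.snoc (Fin.snoc b' (aL * qu * pu⁻¹)) (c * pu⁻¹)) =
            symT (Fin.snoc (Fin.snoc b' aL) c) -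
              ((((symT (Fin.snoc (Fin.snoc b' aL) pu) -
                  symT (Fin.snoc (Fin.snoc b' qu) c)) +
                  symT (Fin.snoc (Fin.snoc b' qu) pu)) +
                  symT (Fin.snoc (Fin.snoc b' pu) c)) -
                  symT (Fin.snoc (Fin.snoc b' pu) pu)) := by
          rw [symT_snd_mul, symT_snd_mul, symT_snd_inv, symT_last_mul, symT_last_mul,
            symT_last_mul, symT_last_inv, symT_last_inv, symT_last_inv]
          abel
        have h1 : D2 k (symT (Fin.snoc (Fin.snoc b' aL) pu)) :=
          D2_symT_swap (D2_symT_append _ hDp)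
        have h2 : D2 k (symT (Fin.snoc (Fin.snoc b' qu) c)) := D2_symT_append _ hDq
        have h3 : D2 k (symT (Fin.snoc (Fin.snoc b' qu) pu)) := D2_symT_append _ hDq
        have h4 : D2 k (symT (Fin.snoc (Fin.snoc b' pu) c)) := D2_symT_append _ hDp
        have h5 : D2 k (symT (Fin.snoc (Fin.snoc b' pu) pu)) := D2_symT_append _ hDp
        apply D2_of_sub_mem (y := (((symT (Fin.snoc (Fin.snoc b' aL) pu) -
            symT (Fin.snoc (Fin.snoc b' qu) c)) +
            symT (Fin.snoc (Fin.snoc b' qu) pu)) +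
            symT (Fin.snoc (Fin.snoc b' pu) c)) -
            symT (Fin.snoc (Fin.snoc b' pu) pu))
        · rw [← expand]
          exact gen
        · exact D2_sub (D2_add (D2_add (D2_sub h1 h2) h3) h4) h5

end MainLemma

/-- Proposition `isspl0` (rational point case) of Voevodsky's
"On 2-torsion in motivic cohomology": if `char k ≠ 2`, `n ≥ 2` (here `n = m+2`) and the norm
quadric `Q_{a₁,…,aₙ}` has a `k`-rational point, i.e. there is a nonzero `(x,t)` with
`⟨⟨a₁,…,a_{n-1}⟩⟩(x) = aₙ t²`, then the symbol `{a₁,…,aₙ}` is divisible by `2`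
in `K_n^M(k)`. -/
theorem milnorSymbol_div_two_of_norm_quadric_rational_point
    {k : Type*} [Field k] (hchar : ringChar k ≠ 2)
    (m : ℕ) (a : Fin (m + 2) → kˣ)
    (hpt : ∃ v : ((Fin (m + 1) → Bool) → k) × k, v ≠ 0 ∧
        pfisterForm (m + 1) (fun i => (a i.castSucc : k)) v.1 =
          (a (Fin.last (m + 1)) : k) * v.2 ^ 2) :
    ∃ y : MilnorKGroup k (m + 2), milnorSymbol a = 2 • y := by
  obtain ⟨v, hv0, hveq⟩ := hpt
  have h2 : (2 : k) ≠ 0 := Ring.two_ne_zero hchar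
  have key : ∃ x, pfisterForm (m + 1) (fun i => (a i.castSucc : k)) x =
      ((a (Fin.last (m + 1)) : kˣ) : k) := by
    by_cases hv2 : v.2 = 0
    · have hx1 : v.1 ≠ 0 := by
        intro h1
        exact hv0 (Prod.ext h1 hv2)
      have hiso : pfisterForm (m + 1) (fun i => (a i.castSucc : k)) v.1 = 0 := by
        rw [hveq, hv2]; ring
      exact pfisterForm_universal h2 (fun i => Units.ne_zero _) hx1 hiso _
    · refine ⟨fun S => (v.2)⁻¹ * v.1 S, ?_⟩
      rw [pfisterForm_smul, hveq]
      field_simp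
  obtain ⟨x, hxx⟩ := key
  have hD := mainT (m + 1) (fun i => a i.castSucc) (a (Fin.last (m + 1))) x hxx
  have ha : (Fin.snoc (fun i => a i.castSucc) (a (Fin.last (m + 1))) : Fin (m + 2) → kˣ) = a :=
    funext fun i => Fin.lastCases (Fin.snoc_last _ _) (fun j => Fin.snoc_castSucc _ _ _) i
  rw [ha] at hD
  obtain ⟨z, hz⟩ := hD
  refine ⟨Submodule.Quotient.mk z, ?_⟩
  have hmk : milnorSymbol a = Submodule.Quotient.mk (z + z) := by
    rw [milnorSymbol]
    exact (Submodule.Quotient.eq _).mpr hz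
  rw [hmk]
  exact ((two_smul ℕ _).trans (Submodule.Quotient.mk_add _).symm).symm
end

section
/- Let k be a field of characteristic different from 2, let n ≥ 2, and let a₁, …, aₙ be units of k. If the n-fold Pfister form ⟨⟨a₁,…,aₙ⟩⟩ is isotropic over k, then the symbol {a₁,…,aₙ} is divisible by 2 in the Milnor K-group K_n^M(k). -/
open scoped TensorProduct

namespace MilnorProof

open Fin Function Additive

variable {k : Type*} [Field k]

/-- `tprod` with the last slot curried off, as a linear map. -/
noncomputable def sym1T (n : ℕ) (v : Fin n → kˣ) :
    Additive kˣ →ₗ[ℤ] ⨂[ℤ]^(n + 1) (Additive kˣ) :=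
  (PiTensorProduct.tprod ℤ (s := fun _ : Fin (n + 1) => Additive kˣ)).curryRight (fun i => Additive.ofMul (v i))

lemma sym1T_apply (n : ℕ) (v : Fin n → kˣ) (x : kˣ) :
    sym1T n v (Additive.ofMul x) =
      PiTensorProduct.tprod (s := fun _ : Fin (n + 1) => Additive kˣ) ℤ (fun t => Additive.ofMul (Fin.snoc (α := fun _ => kˣ) v x t)) := by
  rw [sym1T, MultilinearMap.curryRight_apply]
  congr 1

/-- `tprod` with the last two slots curried off, as a bilinear map. -/
noncomputable def sym2T (n : ℕ) (v : Fin n → kˣ) :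
    Additive kˣ →ₗ[ℤ] Additive kˣ →ₗ[ℤ] ⨂[ℤ]^(n + 2) (Additive kˣ) :=
  ((PiTensorProduct.tprod ℤ (s := fun _ : Fin (n + 2) => Additive kˣ)).curryRight.curryRight) (fun i => Additive.ofMul (v i))

lemma sym2T_apply (n : ℕ) (v : Fin n → kˣ) (x y : kˣ) :
    sym2T n v (Additive.ofMul x) (Additive.ofMul y) =
      PiTensorProduct.tprod (s := fun _ : Fin (n + 2) => Additive kˣ) ℤ (fun t => Additive.ofMul (Fin.snoc (α := fun _ => kˣ) (Fin.snoc (α := fun _ => kˣ) v x) y t)) := by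
  rw [sym2T, MultilinearMap.curryRight_apply, MultilinearMap.curryRight_apply]
  congr 1

lemma symbol_snoc1 (n : ℕ) (v : Fin n → kˣ) (x : kˣ) :
    milnorSymbol (Fin.snoc v x) = Submodule.Quotient.mk (sym1T n v (Additive.ofMul x)) := by
  rw [sym1T_apply]; rfl

lemma symbol_snoc2 (n : ℕ) (v : Fin n → kˣ) (x y : kˣ) :
    milnorSymbol (Fin.snoc (Fin.snoc v x) y)
      = Submodule.Quotient.mk (sym2T n v (Additive.ofMul x) (Additive.ofMul y)) := by
  rw [sym2T_apply]; rfl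

lemma snoc1_mul (n : ℕ) (v : Fin n → kˣ) (x y : kˣ) :
    milnorSymbol (Fin.snoc v (x * y))
      = milnorSymbol (Fin.snoc v x) + milnorSymbol (Fin.snoc v y) := by
  rw [symbol_snoc1, symbol_snoc1, symbol_snoc1, ofMul_mul, map_add]
  rfl

lemma snoc1_inv (n : ℕ) (v : Fin n → kˣ) (x : kˣ) :
    milnorSymbol (Fin.snoc v x⁻¹) = - milnorSymbol (Fin.snoc v x) := by
  rw [symbol_snoc1, symbol_snoc1, ofMul_inv, map_neg]
  rfl

lemma snoc2_mul_left (n : ℕ) (v : Fin n → kˣ) (x y z : kˣ) :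
    milnorSymbol (Fin.snoc (Fin.snoc v (x * y)) z)
      = milnorSymbol (Fin.snoc (Fin.snoc v x) z) + milnorSymbol (Fin.snoc (Fin.snoc v y) z) := by
  rw [symbol_snoc2, symbol_snoc2, symbol_snoc2, ofMul_mul, map_add, LinearMap.add_apply]
  rfl

lemma snoc2_inv_left (n : ℕ) (v : Fin n → kˣ) (x z : kˣ) :
    milnorSymbol (Fin.snoc (Fin.snoc v x⁻¹) z)
      = - milnorSymbol (Fin.snoc (Fin.snoc v x) z) := by
  rw [symbol_snoc2, symbol_snoc2, ofMul_inv, map_neg, LinearMap.neg_apply]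
  rfl

lemma symbol_steinberg (n : ℕ) (u : Fin n → kˣ) (i j : Fin n)
    (hij : (i : ℕ) + 1 = (j : ℕ)) (h : ((u i : k) + (u j : k) = 1)) :
    milnorSymbol u = 0 := by
  rw [milnorSymbol]
  exact (Submodule.Quotient.mk_eq_zero (steinbergSubmodule k n)).mpr (Submodule.subset_span ⟨u, i, j, hij, h, rfl⟩)

lemma snoc2_steinberg (n : ℕ) (v : Fin n → kˣ) (x y : kˣ) (h : (x : k) + y = 1) :
    milnorSymbol (Fin.snoc (Fin.snoc v x) y) = 0 := by
  refine symbol_steinberg _ _ (Fin.castSucc (Fin.last n)) (Fin.last (n + 1)) (by simp) ?_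
  rw [Fin.snoc_castSucc, Fin.snoc_last, Fin.snoc_last]
  exact h

lemma snoc2_one_left (n : ℕ) (v : Fin n → kˣ) (z : kˣ) :
    milnorSymbol (Fin.snoc (Fin.snoc v 1) z) = 0 := by
  rw [symbol_snoc2]
  have : Additive.ofMul (1 : kˣ) = 0 := rfl
  rw [this, map_zero, LinearMap.zero_apply]
  rfl

lemma snoc2_one_right (n : ℕ) (v : Fin n → kˣ) (z : kˣ) :
    milnorSymbol (Fin.snoc (Fin.snoc v z) 1) = 0 := by
  rw [symbol_snoc2]
  have : Additive.ofMul (1 : kˣ) = 0 := rfl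
  rw [this, map_zero]
  rfl

lemma snoc2_neg_self (n : ℕ) (v : Fin n → kˣ) (x : kˣ) :
    milnorSymbol (Fin.snoc (Fin.snoc v x) (-x)) = 0 := by
  by_cases hx1 : x = 1
  · subst hx1; exact snoc2_one_left n v (-1)
  · have hx1' : (x : k) ≠ 1 := fun h => hx1 (Units.ext (by simpa using h))
    have hx0 : (x : k) ≠ 0 := x.ne_zero
    have h1 : (1 : k) - (x : k) ≠ 0 := sub_ne_zero.mpr (Ne.symm hx1')
    have h2 : (1 : k) - ((x : k))⁻¹ ≠ 0 := by
      intro h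
      exact hx1' (inv_eq_one.mp (sub_eq_zero.mp h).symm)
    set p : kˣ := Units.mk0 _ h1 with hp
    set q : kˣ := Units.mk0 _ h2 with hq
    have key : -x = p * q⁻¹ := by
      apply Units.ext
      rw [Units.val_mul, Units.val_neg, Units.val_inv_eq_inv_val]
      rw [hp, hq, Units.val_mk0, Units.val_mk0, eq_comm,
        mul_inv_eq_iff_eq_mul₀ h2, mul_sub, mul_one, neg_mul, mul_inv_cancel₀ hx0]
      ring
    rw [key, snoc1_mul, snoc1_inv]
    have hst1 : milnorSymbol (Fin.snoc (Fin.snoc v x) p) = 0 := by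
      refine snoc2_steinberg n v x p ?_
      rw [hp, Units.val_mk0]; ring
    have hst2 : milnorSymbol (Fin.snoc (Fin.snoc v x) q) = 0 := by
      have hxi : x = (x⁻¹)⁻¹ := by rw [inv_inv]
      rw [hxi, snoc2_inv_left]
      have : milnorSymbol (Fin.snoc (Fin.snoc v x⁻¹) q) = 0 := by
        refine snoc2_steinberg n v x⁻¹ q ?_
        rw [hq, Units.val_mk0]
        have : ((x⁻¹ : kˣ) : k) = ((x : k))⁻¹ := by
          rw [Units.val_inv_eq_inv_val]
        rw [this]; ring
      rw [this, neg_zero]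
    rw [hst1, hst2, neg_zero, add_zero]

lemma snoc2_swap (n : ℕ) (v : Fin n → kˣ) (x y : kˣ) :
    milnorSymbol (Fin.snoc (Fin.snoc v x) y) = - milnorSymbol (Fin.snoc (Fin.snoc v y) x) := by
  have h0 : milnorSymbol (Fin.snoc (Fin.snoc v (x * y)) (-(x * y))) = 0 :=
    snoc2_neg_self n v (x * y)
  rw [snoc2_mul_left] at h0
  have e1 : -(x * y) = (-x) * y := (neg_mul x y).symm
  have e2 : -(x * y) = (-y) * x := by rw [mul_comm]; exact (neg_mul y x).symm
  rw [show milnorSymbol (Fin.snoc (Fin.snoc v x) (-(x * y)))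
        = milnorSymbol (Fin.snoc (Fin.snoc v x) y) from by
      rw [e1, snoc1_mul, snoc2_neg_self, zero_add],
    show milnorSymbol (Fin.snoc (Fin.snoc v y) (-(x * y)))
        = milnorSymbol (Fin.snoc (Fin.snoc v y) x) from by
      rw [e2, snoc1_mul, snoc2_neg_self, zero_add]] at h0
  exact eq_neg_of_add_eq_zero_left h0

/-- Appending a fixed element in the last slot, on the tensor level. -/
noncomputable def appendT (n : ℕ) (c : Additive kˣ) :
    (⨂[ℤ]^n (Additive kˣ)) →ₗ[ℤ] ⨂[ℤ]^(n + 1) (Additive kˣ) :=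
  PiTensorProduct.lift
    ((LinearMap.applyₗ c).compMultilinearMap
      ((PiTensorProduct.tprod ℤ (s := fun _ : Fin (n + 1) => Additive kˣ)).curryRight))

lemma appendT_tprod (n : ℕ) (c : Additive kˣ) (f : Fin n → Additive kˣ) :
    appendT n c (PiTensorProduct.tprod ℤ f)
      = PiTensorProduct.tprod (s := fun _ : Fin (n + 1) => Additive kˣ) ℤ
          (Fin.snoc (α := fun _ => Additive kˣ) f c) := by
  rw [appendT, PiTensorProduct.lift.tprod, LinearMap.compMultilinearMap_apply]
  rfl

lemma appendT_steinberg (n : ℕ) (b : kˣ) :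
    steinbergSubmodule k n ≤
      (steinbergSubmodule k (n + 1)).comap (appendT n (Additive.ofMul b)) := by
  rw [steinbergSubmodule, Submodule.span_le]
  rintro x ⟨u, i, j, hij, h, rfl⟩
  simp only [SetLike.mem_coe, Submodule.mem_comap, appendT_tprod]
  apply Submodule.subset_span
  refine ⟨Fin.snoc u b, Fin.castSucc i, Fin.castSucc j, by simpa using hij, ?_, ?_⟩
  · rw [Fin.snoc_castSucc, Fin.snoc_castSucc]; exact h
  · congr 1

/-- Appending a fixed unit in the last slot, on the Milnor K-group level. -/
noncomputable def appendQ (n : ℕ) (b : kˣ) : MilnorKGroup k n → MilnorKGroup k (n + 1) :=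
  fun z => Submodule.mapQ (steinbergSubmodule k n) (steinbergSubmodule k (n + 1))
    (appendT n (Additive.ofMul b)) (appendT_steinberg n b) z

lemma appendQ_symbol (n : ℕ) (b : kˣ) (v : Fin n → kˣ) :
    appendQ n b (milnorSymbol v) = milnorSymbol (Fin.snoc v b) := by
  rw [appendQ, milnorSymbol, Submodule.mapQ_apply, appendT_tprod, milnorSymbol]
  congr 1

lemma appendQ_add (n : ℕ) (b : kˣ) (z₁ z₂ : MilnorKGroup k n) :
    appendQ n b (z₁ + z₂) = appendQ n b z₁ + appendQ n b z₂ := by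
  rw [appendQ]
  exact map_add _ z₁ z₂

lemma pfisterCoeff_ite (n : ℕ) (a : Fin n → k) (S : Fin n → Bool) :
    pfisterCoeff n a S = ∏ i : Fin n, (if S i = true then -(a i) else 1) := by
  rw [pfisterCoeff, Finset.prod_filter]

lemma pfisterCoeff_snoc_false (n : ℕ) (a : Fin (n + 1) → k) (S : Fin n → Bool) :
    pfisterCoeff (n + 1) a (Fin.snoc S false) = pfisterCoeff n (a ∘ Fin.castSucc) S := by
  rw [pfisterCoeff_ite, pfisterCoeff_ite, Fin.prod_univ_castSucc]
  simp [Fin.snoc_castSucc, Fin.snoc_last]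

lemma pfisterCoeff_snoc_true (n : ℕ) (a : Fin (n + 1) → k) (S : Fin n → Bool) :
    pfisterCoeff (n + 1) a (Fin.snoc S true)
      = -(a (Fin.last n)) * pfisterCoeff n (a ∘ Fin.castSucc) S := by
  rw [pfisterCoeff_ite, pfisterCoeff_ite, Fin.prod_univ_castSucc]
  simp [Fin.snoc_castSucc, Fin.snoc_last, mul_comm]

lemma pfisterForm_zero_eq (a : Fin 0 → k) (w : (Fin 0 → Bool) → k) :
    pfisterForm 0 a w = w (fun i => i.elim0) ^ 2 := by
  rw [pfisterForm]
  rw [show (Finset.univ : Finset (Fin 0 → Bool)) = {fun i => i.elim0} from by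
    apply Finset.eq_singleton_iff_unique_mem.mpr
    exact ⟨Finset.mem_univ _, fun S _ => by funext i; exact i.elim0⟩]
  rw [Finset.sum_singleton]
  have : pfisterCoeff 0 a (fun i => i.elim0) = 1 := by
    rw [pfisterCoeff_ite]
    exact Finset.prod_of_isEmpty _
  rw [this, one_mul]

lemma pfisterForm_split (n : ℕ) (a : Fin (n + 1) → k) (w : (Fin (n + 1) → Bool) → k) :
    pfisterForm (n + 1) a w =
      pfisterForm n (a ∘ Fin.castSucc) (fun S => w (Fin.snoc S false))
        - a (Fin.last n) * pfisterForm n (a ∘ Fin.castSucc) (fun S => w (Fin.snoc S true)) := by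
  rw [pfisterForm]
  rw [← Fintype.sum_equiv (Fin.snocEquiv (fun _ : Fin (n + 1) => Bool))
    (fun p => pfisterCoeff (n + 1) a (Fin.snoc p.2 p.1) * w (Fin.snoc p.2 p.1) ^ 2)
    (fun S => pfisterCoeff (n + 1) a S * w S ^ 2)
    (fun p => by simp [Fin.snocEquiv])]
  rw [Fintype.sum_prod_type, Fintype.sum_bool]
  simp only [pfisterCoeff_snoc_false, pfisterCoeff_snoc_true]
  rw [pfisterForm, pfisterForm, Finset.mul_sum]
  rw [sub_eq_add_neg, ← Finset.sum_neg_distrib, add_comm]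
  congr 1
  apply Finset.sum_congr rfl
  intro S _
  ring

/-- If `d` is a nonzero value of the Pfister form `⟨⟨a₁,…,a_ℓ⟩⟩`, then the symbol
`{a₁,…,a_ℓ,d}` is divisible by 2. -/
lemma valA : ∀ (ℓ : ℕ) (a : Fin ℓ → kˣ) (d : kˣ) (u : (Fin ℓ → Bool) → k),
    pfisterForm ℓ (fun i => (a i : k)) u = (d : k) →
    ∃ z : MilnorKGroup k (ℓ + 1), milnorSymbol (Fin.snoc a d) = z + z := by
  intro ℓ
  induction ℓ with
  | zero =>
    intro a d u hu
    rw [pfisterForm_zero_eq] at hu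
    have ht : u (fun i => i.elim0) ≠ 0 := by
      intro h
      apply d.ne_zero
      rw [← hu, h]
      ring
    set t : kˣ := Units.mk0 _ ht with hT
    have hd : d = t * t := by
      apply Units.ext
      rw [Units.val_mul, hT, Units.val_mk0, ← sq, hu]
    rw [hd, snoc1_mul]
    exact ⟨_, rfl⟩
  | succ ℓ IH =>
    intro a d u hu
    set pre : Fin ℓ → kˣ := fun i => a (Fin.castSucc i) with hpre
    set aL : kˣ := a (Fin.last ℓ) with haL
    have ha : Fin.snoc pre aL = a := Fin.snoc_init_self a
    set u₀ : (Fin ℓ → Bool) → k := fun S => u (Fin.snoc S false) with hu₀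
    set u₁ : (Fin ℓ → Bool) → k := fun S => u (Fin.snoc S true) with hu₁
    set X : k := pfisterForm ℓ (fun i => (pre i : k)) u₀ with hX
    set Y : k := pfisterForm ℓ (fun i => (pre i : k)) u₁ with hY
    have hsplit : (d : k) = X - (aL : k) * Y := by
      rw [← hu]
      exact pfisterForm_split ℓ (fun i => (a i : k)) u
    by_cases hy : Y = 0
    · have hx : X ≠ 0 := by
        intro h
        apply d.ne_zero
        rw [hsplit, h, hy]
        ring
      set xu : kˣ := Units.mk0 X hx with hxu
      have hdx : d = xu := by
        apply Units.ext
        rw [hxu, Units.val_mk0, hsplit, hy]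
        ring
      obtain ⟨z, hz⟩ := IH pre xu u₀ rfl
      refine ⟨-(appendQ (ℓ + 1) aL z), ?_⟩
      rw [← ha, hdx, snoc2_swap, ← appendQ_symbol, hz, appendQ_add]
      abel
    · set yu : kˣ := Units.mk0 Y hy with hyu
      by_cases hx : X = 0
      · have hd' : d = (-aL) * yu := by
          apply Units.ext
          rw [Units.val_mul, Units.val_neg, hyu, Units.val_mk0, hsplit, hx]
          ring
        obtain ⟨z, hz⟩ := IH pre yu u₁ rfl
        refine ⟨-(appendQ (ℓ + 1) aL z), ?_⟩
        rw [← ha, hd', snoc1_mul, snoc2_neg_self, zero_add, snoc2_swap,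
          ← appendQ_symbol, hz, appendQ_add]
        abel
      · set xu : kˣ := Units.mk0 X hx with hxu
        set b : kˣ := aL * yu * xu⁻¹ with hb
        have hbval : (b : k) = (aL : k) * Y * X⁻¹ := by
          rw [hb, Units.val_mul, Units.val_mul, Units.val_inv_eq_inv_val, hxu, hyu,
            Units.val_mk0, Units.val_mk0]
        have hc : (1 : k) - (b : k) ≠ 0 := by
          intro h
          apply d.ne_zero
          have hb1 : (b : k) = 1 := by
            have := sub_eq_zero.mp h
            exact this.symm
          rw [hbval] at hb1
          have hXY : (aL : k) * Y = X := by
            field_simp at hb1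
            try exact hb1
            try linear_combination hb1
          rw [hsplit, hXY]
          ring
        set cu : kˣ := Units.mk0 _ hc with hcu
        have hdu : d = xu * cu := by
          apply Units.ext
          rw [Units.val_mul, hxu, hcu, Units.val_mk0, Units.val_mk0, hsplit, hbval]
          field_simp
          try ring
        have haL' : aL = b * xu * yu⁻¹ := by
          rw [hb]
          group
        obtain ⟨zx, hzx⟩ := IH pre xu u₀ rfl
        obtain ⟨zy, hzy⟩ := IH pre yu u₁ rfl
        have h1 : milnorSymbol (Fin.snoc (Fin.snoc pre aL) xu)
            = -(appendQ (ℓ + 1) aL zx + appendQ (ℓ + 1) aL zx) := by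
          rw [snoc2_swap, ← appendQ_symbol, hzx, appendQ_add]
        have hst : milnorSymbol (Fin.snoc (Fin.snoc pre b) cu) = 0 := by
          refine snoc2_steinberg ℓ pre b cu ?_
          rw [hcu, Units.val_mk0]
          ring
        have h2 : milnorSymbol (Fin.snoc (Fin.snoc pre aL) cu)
            = (appendQ (ℓ + 1) cu zx + appendQ (ℓ + 1) cu zx)
              + -(appendQ (ℓ + 1) cu zy + appendQ (ℓ + 1) cu zy) := by
          rw [haL', snoc2_mul_left, snoc2_mul_left, hst, zero_add, snoc2_inv_left,
            ← appendQ_symbol (ℓ + 1) cu (Fin.snoc pre xu),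
            ← appendQ_symbol (ℓ + 1) cu (Fin.snoc pre yu), hzx, hzy, appendQ_add, appendQ_add]
        refine ⟨-(appendQ (ℓ + 1) aL zx) + appendQ (ℓ + 1) cu zx
          + -(appendQ (ℓ + 1) cu zy), ?_⟩
        rw [← ha, hdu, snoc1_mul, h1, h2]
        abel

/-- If the Pfister form `⟨⟨a₁,…,aₙ⟩⟩` is isotropic then `{a₁,…,aₙ}` is divisible by 2. -/
lemma valMain : ∀ (n : ℕ) (a : Fin n → kˣ) (w : (Fin n → Bool) → k), w ≠ 0 →
    pfisterForm n (fun i => (a i : k)) w = 0 →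
    ∃ z : MilnorKGroup k n, milnorSymbol a = z + z := by
  intro n
  induction n with
  | zero =>
    intro a w hw h0
    exfalso
    apply hw
    rw [pfisterForm_zero_eq] at h0
    have hc : w (fun i => i.elim0) = 0 := by
      exact pow_eq_zero_iff (n := 2) (by norm_num) |>.mp h0
    funext S
    rw [show S = (fun i => i.elim0) from by funext i; exact i.elim0]
    exact hc
  | succ n IH =>
    intro a w hw h0
    set pre : Fin n → kˣ := fun i => a (Fin.castSucc i) with hpre
    set aL : kˣ := a (Fin.last n) with haL
    have ha : Fin.snoc pre aL = a := Fin.snoc_init_self a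
    set u₀ : (Fin n → Bool) → k := fun S => w (Fin.snoc S false) with hu₀
    set u₁ : (Fin n → Bool) → k := fun S => w (Fin.snoc S true) with hu₁
    set X : k := pfisterForm n (fun i => (pre i : k)) u₀ with hX
    set Y : k := pfisterForm n (fun i => (pre i : k)) u₁ with hY
    have hsplit : (0 : k) = X - (aL : k) * Y := by
      rw [← h0]
      exact pfisterForm_split n (fun i => (a i : k)) w
    by_cases hy : Y = 0
    · -- then X = 0 as well, and one of u₀, u₁ is a nonzero isotropic vector for the subform
      have hx : X = 0 := by
        have := hsplit
        rw [hy, mul_zero, sub_zero] at this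
        exact this.symm
      obtain ⟨T, hT⟩ := Function.ne_iff.mp hw
      have hwT : w (Fin.snoc (Fin.init T) (T (Fin.last n))) ≠ 0 := by
        rw [Fin.snoc_init_self]
        exact hT
      have key : ∃ w' : (Fin n → Bool) → k, w' ≠ 0 ∧
          pfisterForm n (fun i => (pre i : k)) w' = 0 := by
        cases hlast : T (Fin.last n) with
        | false =>
          refine ⟨u₀, ?_, hx ▸ rfl⟩
          apply Function.ne_iff.mpr
          refine ⟨Fin.init T, ?_⟩
          rw [hu₀]
          rw [hlast] at hwT
          simpa using hwT
        | true =>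
          refine ⟨u₁, ?_, hy ▸ rfl⟩
          apply Function.ne_iff.mpr
          refine ⟨Fin.init T, ?_⟩
          rw [hu₁]
          rw [hlast] at hwT
          simpa using hwT
      obtain ⟨w', hw', hzero⟩ := key
      obtain ⟨z, hz⟩ := IH pre w' hw' hzero
      refine ⟨appendQ n aL z, ?_⟩
      rw [← ha, ← appendQ_symbol, hz, appendQ_add]
    · set yu : kˣ := Units.mk0 Y hy with hyu
      have hx : X ≠ 0 := by
        intro h
        rw [h, zero_sub, eq_comm, neg_eq_zero, mul_eq_zero] at hsplit
        rcases hsplit with h' | h'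
        · exact aL.ne_zero h'
        · exact hy h'
      set xu : kˣ := Units.mk0 X hx with hxu
      have hA : aL = xu * yu⁻¹ := by
        apply Units.ext
        rw [Units.val_mul, Units.val_inv_eq_inv_val, hxu, hyu, Units.val_mk0, Units.val_mk0]
        have hXY : X = (aL : k) * Y := sub_eq_zero.mp hsplit.symm
        rw [hXY]
        field_simp
      obtain ⟨zx, hzx⟩ := valA n pre xu u₀ rfl
      obtain ⟨zy, hzy⟩ := valA n pre yu u₁ rfl
      refine ⟨zx + -zy, ?_⟩
      rw [← ha, hA, snoc1_mul, snoc1_inv, hzx, hzy]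
      abel

end MilnorProof

/-- Proposition `isspl0` (Pfister quadric version) of Voevodsky's
"On 2-torsion in motivic cohomology": if `char k ≠ 2`, `n ≥ 2` (here `n = m+2`) and the
`n`-fold Pfister form `⟨⟨a₁,…,aₙ⟩⟩` is isotropic over `k`, then the symbol `{a₁,…,aₙ}` is
divisible by `2` in `K_n^M(k)`. -/
theorem milnorSymbol_div_two_of_pfister_isotropic
    {k : Type*} [Field k] (hchar : ringChar k ≠ 2)
    (m : ℕ) (a : Fin (m + 2) → kˣ)
    (hiso : ∃ w : (Fin (m + 2) → Bool) → k, w ≠ 0 ∧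
        pfisterForm (m + 2) (fun i => (a i : k)) w = 0) :
    ∃ y : MilnorKGroup k (m + 2), milnorSymbol a = 2 • y := by
  obtain ⟨w, hw, h0⟩ := hiso
  obtain ⟨z, hz⟩ := MilnorProof.valMain (m + 2) a w hw h0
  exact ⟨z, by rw [hz, two_nsmul]⟩
end
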